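/- Let A be a real symmetric positive definite n×n matrix, T > 0, M ≥ 1 an integer, τ = T/M, and let G = (I + (τ/2)A)^{-1}(I − (τ/2)A), so that ‖G‖ < 1. Let f : [0,T] → ℝⁿ be continuous, φ ∈ ℝⁿ, and for each α ∈ ℝⁿ let v^M(α) ∈ ℝⁿ denote the final Crank–Nicholson iterate defined by v⁰(α) = α and v^{m+1}(α) = G v^m(α) + τ (I + (τ/2)A)^{-1} f(t_m + τ/2) for m = 0,…,M−1, where t_m = mτ. Let v₀ ∈ ℝⁿ satisfy v₀ = v(T; v₀) − φ, where v(·; v₀) is the solution of the initial value problem v' + A v = f, v(0) = v₀. Assume there is a constant C ≥ 0 such that the Crank–Nicholson global error bound ‖v(T; v₀) − v^M(v₀)‖ ≤ C τ² holds. Then the shooting iterates α_{k+1} = v^M(α_k) − φ (k = 0,1,2,…) satisfy ‖α_{k+1} − v₀‖ ≤ ‖G‖^M ‖α_k − v₀‖ + C τ² (1 + ‖G‖^M)(1 − ‖G‖^M)^{-1} for every k ≥ 0. -/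
import Mathlib


/-- The continuous linear map on Euclidean spaces induced by a real matrix.
`‖matCLM B‖` is the operator 2-norm (spectral norm) of `B`. -/
noncomputable def matCLM {m n : ℕ} (B : Matrix (Fin m) (Fin n) ℝ) :
    EuclideanSpace ℝ (Fin n) →L[ℝ] EuclideanSpace ℝ (Fin m) :=
  LinearMap.toContinuousLinearMap (Matrix.toEuclideanLin B)

/-- convergence estimate for the shooting method combined with the
Crank–Nicholson time discretization. -/
theorem stmt8 {n : ℕ} (A : Matrix (Fin n) (Fin n) ℝ) (hA : A.PosDef)
    (T : ℝ) (hT : 0 < T) (M : ℕ) (hM : 1 ≤ M) (τ : ℝ) (hτ : τ = T / M)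
    (G : Matrix (Fin n) (Fin n) ℝ)
    (hGdef : G = (1 + (τ / 2) • A)⁻¹ * (1 - (τ / 2) • A))
    (hG : ‖matCLM G‖ < 1)
    (f : ℝ → EuclideanSpace ℝ (Fin n)) (hf : ContinuousOn f (Set.Icc 0 T))
    (φ : EuclideanSpace ℝ (Fin n))
    -- `w α m` is the `m`-th Crank–Nicholson iterate `v^m(α)` with initial data `α`
    (w : EuclideanSpace ℝ (Fin n) → ℕ → EuclideanSpace ℝ (Fin n))
    (hw0 : ∀ α, w α 0 = α)
    (hwrec : ∀ α m, w α (m + 1) = matCLM G (w α m)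
      + τ • matCLM (1 + (τ / 2) • A)⁻¹ (f ((m : ℝ) * τ + τ / 2)))
    -- `vsol` is the solution of the IVP `v' + A v = f`, `v(0) = v₀`
    (v0 : EuclideanSpace ℝ (Fin n)) (vsol : ℝ → EuclideanSpace ℝ (Fin n))
    (hsol : ∀ t ∈ Set.Ioo (0 : ℝ) T, HasDerivAt vsol (f t - matCLM A (vsol t)) t)
    (hsol0 : vsol 0 = v0)
    (hfix : v0 = vsol T - φ)
    -- Crank–Nicholson global error bound
    (C : ℝ) (hC : 0 ≤ C) (herr : ‖vsol T - w v0 M‖ ≤ C * τ ^ 2)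
    -- shooting iterates
    (α : ℕ → EuclideanSpace ℝ (Fin n))
    (hα : ∀ k, α (k + 1) = w (α k) M - φ) :
    ∀ k, ‖α (k + 1) - v0‖ ≤ ‖matCLM G‖ ^ M * ‖α k - v0‖
      + C * τ ^ 2 * (1 + ‖matCLM G‖ ^ M) * (1 - ‖matCLM G‖ ^ M)⁻¹ := by
  have key : ∀ a b : EuclideanSpace ℝ (Fin n), ∀ m : ℕ,
      ‖w a m - w b m‖ ≤ ‖matCLM G‖ ^ m * ‖a - b‖ := by
    intro a b m
    induction m with
    | zero => rw [hw0, hw0, pow_zero, one_mul]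
    | succ m ih =>
      rw [hwrec, hwrec]
      have heq : matCLM G (w a m) + τ • matCLM (1 + (τ / 2) • A)⁻¹ (f ((m : ℝ) * τ + τ / 2))
          - (matCLM G (w b m) + τ • matCLM (1 + (τ / 2) • A)⁻¹ (f ((m : ℝ) * τ + τ / 2)))
          = matCLM G (w a m - w b m) := by
        rw [map_sub]; abel
      rw [heq]
      calc ‖matCLM G (w a m - w b m)‖ ≤ ‖matCLM G‖ * ‖w a m - w b m‖ :=
            (matCLM G).le_opNorm _
        _ ≤ ‖matCLM G‖ * (‖matCLM G‖ ^ m * ‖a - b‖) :=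
            mul_le_mul_of_nonneg_left ih (norm_nonneg _)
        _ = ‖matCLM G‖ ^ (m + 1) * ‖a - b‖ := by ring
  intro k
  set g : ℝ := ‖matCLM G‖ ^ M with hg
  have hg0 : (0 : ℝ) ≤ g := pow_nonneg (norm_nonneg _) _
  have hg1 : g < 1 := pow_lt_one₀ (norm_nonneg _) hG (by omega)
  have hpos : (0 : ℝ) < 1 - g := by linarith
  have hdecomp : α (k + 1) - v0 = (w (α k) M - w v0 M) + (w v0 M - vsol T) := by
    rw [hα, hfix]; abel
  have h1 : ‖α (k + 1) - v0‖ ≤ g * ‖α k - v0‖ + C * τ ^ 2 := by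
    rw [hdecomp]
    refine le_trans (norm_add_le _ _) (add_le_add (key _ _ _) ?_)
    rw [← norm_neg]
    simpa using herr
  have h2 : C * τ ^ 2 ≤ C * τ ^ 2 * (1 + g) * (1 - g)⁻¹ := by
    have hct : (0 : ℝ) ≤ C * τ ^ 2 := mul_nonneg hC (sq_nonneg _)
    have hone : (1 : ℝ) ≤ (1 + g) * (1 - g)⁻¹ := by
      rw [← div_eq_mul_inv, le_div_iff₀ hpos]; linarith
    calc C * τ ^ 2 = C * τ ^ 2 * 1 := by ring
      _ ≤ C * τ ^ 2 * ((1 + g) * (1 - g)⁻¹) := mul_le_mul_of_nonneg_left hone hct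
      _ = C * τ ^ 2 * (1 + g) * (1 - g)⁻¹ := by ring
  linarith
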